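/- (Lax pair for the KdV equation.) Let q : ℝ² → ℝ be smooth. Set a = diag(1, −1), u = [[0, q],[1, 0]], Q₂ = [[−q/2, −q_x/2],[0, q/2]], and Q₃ = [[q_x/4, (q_xx − 2q²)/4],[−q/2, −q_x/4]], all real 2×2 matrix-valued functions on ℝ². Then q satisfies the KdV equation q_t = (1/4)(q_xxx − 6 q q_x) if and only if for every λ ∈ ℝ the zero-curvature equation ∂_x(aλ³ + uλ² + Q₂λ + Q₃) − ∂_t(aλ + u) + [aλ + u, aλ³ + uλ² + Q₂λ + Q₃] = 0 holds identically in (x,t). -/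

import Mathlib

open Matrix
attribute [local instance] Matrix.normedAddCommGroup Matrix.normedSpace

private lemma hasDerivAt_mat22 {f g h k : ℝ → ℝ} {f' g' h' k' : ℝ} {x : ℝ}
    (hf : HasDerivAt f f' x) (hg : HasDerivAt g g' x)
    (hh : HasDerivAt h h' x) (hk : HasDerivAt k k' x) :
    HasDerivAt (fun y => (!![f y, g y; h y, k y] : Matrix (Fin 2) (Fin 2) ℝ))
      !![f', g'; h', k'] x := by
  have key : ∀ (p q r s : ℝ), (!![p,q;r,s] : Matrix (Fin 2) (Fin 2) ℝ)
      = p • !![1,0;0,0] + q • !![0,1;0,0] + r • !![0,0;1,0] + s • !![0,0;0,1] := by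
    intro p q r s
    ext i j
    fin_cases i <;> fin_cases j <;> simp [Matrix.add_apply, Matrix.smul_apply]
  have hfun : (fun y => (!![f y, g y; h y, k y] : Matrix (Fin 2) (Fin 2) ℝ))
      = fun y => f y • !![1,0;0,0] + g y • !![0,1;0,0] + h y • !![0,0;1,0] + k y • !![0,0;0,1] :=
    funext fun y => key _ _ _ _
  rw [hfun, key f' g' h' k']
  exact (((hf.smul_const _).add (hg.smul_const _)).add (hh.smul_const _)).add (hk.smul_const _)

private lemma hasDerivAt_fst {F : ℝ × ℝ → ℝ} (hF : ContDiff ℝ (⊤:ℕ∞) F) (x t : ℝ) :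
    HasDerivAt (fun y => F (y, t)) (fderiv ℝ F (x, t) (1, 0)) x := by
  have h1 : HasDerivAt (fun y : ℝ => (y, t)) ((1:ℝ), (0:ℝ)) x :=
    (hasDerivAt_id x).prodMk (hasDerivAt_const x t)
  have h2 : HasFDerivAt F (fderiv ℝ F (x, t)) (x, t) :=
    (hF.differentiable (by simp) (x, t)).hasFDerivAt
  exact h2.comp_hasDerivAt x h1

private lemma hasDerivAt_snd {F : ℝ × ℝ → ℝ} (hF : ContDiff ℝ (⊤:ℕ∞) F) (x t : ℝ) :
    HasDerivAt (fun s => F (x, s)) (fderiv ℝ F (x, t) (0, 1)) t := by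
  have h1 : HasDerivAt (fun s : ℝ => (x, s)) ((0:ℝ), (1:ℝ)) t :=
    (hasDerivAt_const t x).prodMk (hasDerivAt_id t)
  have h2 : HasFDerivAt F (fderiv ℝ F (x, t)) (x, t) :=
    (hF.differentiable (by simp) (x, t)).hasFDerivAt
  exact h2.comp_hasDerivAt t h1

private lemma contDiff_fderiv_apply {F : ℝ × ℝ → ℝ} (hF : ContDiff ℝ (⊤:ℕ∞) F) (v : ℝ × ℝ) :
    ContDiff ℝ (⊤:ℕ∞) (fun p => fderiv ℝ F p v) := by
  have h : ContDiff ℝ (⊤:ℕ∞) (fderiv ℝ F) := hF.fderiv_right (by simp)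
  exact (ContinuousLinearMap.apply ℝ ℝ v).contDiff.comp h

theorem stmt14 (q : ℝ → ℝ → ℝ)
    (hq : ContDiff ℝ (⊤ : ℕ∞) fun p : ℝ × ℝ => q p.1 p.2)
    -- partial derivatives of q
    (qx qxx qxxx qt : ℝ → ℝ → ℝ)
    (hqx : ∀ x t, qx x t = deriv (fun y => q y t) x)
    (hqxx : ∀ x t, qxx x t = deriv (fun y => qx y t) x)
    (hqxxx : ∀ x t, qxxx x t = deriv (fun y => qxx y t) x)
    (hqt : ∀ x t, qt x t = deriv (fun s => q x s) t)
    -- the matrices a, u, Q₂, Q₃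
    (a : Matrix (Fin 2) (Fin 2) ℝ) (ha : a = !![1, 0; 0, -1])
    (u Q₂ Q₃ : ℝ → ℝ → Matrix (Fin 2) (Fin 2) ℝ)
    (hu : ∀ x t, u x t = !![0, q x t; 1, 0])
    (hQ₂ : ∀ x t, Q₂ x t = !![-(q x t) / 2, -(qx x t) / 2; 0, q x t / 2])
    (hQ₃ : ∀ x t, Q₃ x t = !![qx x t / 4, (qxx x t - 2 * q x t ^ 2) / 4;
                              -(q x t) / 2, -(qx x t) / 4]) :
    -- KdV equation
    (∀ x t, qt x t = (1 / 4) * (qxxx x t - 6 * q x t * qx x t))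
    ↔
    -- zero-curvature equation for every λ
    (∀ lam : ℝ, ∀ x t : ℝ,
      deriv (fun y => lam ^ 3 • a + lam ^ 2 • u y t + lam • Q₂ y t + Q₃ y t) x
        - deriv (fun s => lam • a + u x s) t
        + ((lam • a + u x t)
              * (lam ^ 3 • a + lam ^ 2 • u x t + lam • Q₂ x t + Q₃ x t)
            - (lam ^ 3 • a + lam ^ 2 • u x t + lam • Q₂ x t + Q₃ x t)
              * (lam • a + u x t))
      = 0) := by
  -- first-order partial derivative facts from smoothness
  set G1 : ℝ × ℝ → ℝ := fun p => fderiv ℝ (fun p : ℝ × ℝ => q p.1 p.2) p (1, 0) with hG1def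
  have hG1 : ContDiff ℝ (⊤:ℕ∞) G1 := contDiff_fderiv_apply hq _
  have hdq : ∀ x t, HasDerivAt (fun y => q y t) (qx x t) x := by
    intro x t
    have h := hasDerivAt_fst hq x t
    have e : qx x t = fderiv ℝ (fun p : ℝ × ℝ => q p.1 p.2) (x, t) (1, 0) := by
      rw [hqx x t]; exact h.deriv
    exact e ▸ h
  have eq1 : ∀ x t, qx x t = G1 (x, t) := by
    intro x t
    have h := hasDerivAt_fst hq x t
    rw [hqx x t]; exact h.deriv
  set G2 : ℝ × ℝ → ℝ := fun p => fderiv ℝ G1 p (1, 0) with hG2def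
  have hG2 : ContDiff ℝ (⊤:ℕ∞) G2 := contDiff_fderiv_apply hG1 _
  have hdqx : ∀ x t, HasDerivAt (fun y => qx y t) (qxx x t) x := by
    intro x t
    have h := hasDerivAt_fst hG1 x t
    have h' : HasDerivAt (fun y => qx y t) (fderiv ℝ G1 (x, t) (1, 0)) x :=
      h.congr_of_eventuallyEq (Filter.Eventually.of_forall fun y => eq1 y t)
    have e : qxx x t = fderiv ℝ G1 (x, t) (1, 0) := by
      rw [hqxx x t]; exact h'.deriv
    exact e ▸ h'
  have eq2 : ∀ x t, qxx x t = G2 (x, t) := by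
    intro x t
    have h := hasDerivAt_fst hG1 x t
    have h' : HasDerivAt (fun y => qx y t) (fderiv ℝ G1 (x, t) (1, 0)) x :=
      h.congr_of_eventuallyEq (Filter.Eventually.of_forall fun y => eq1 y t)
    rw [hqxx x t]; exact h'.deriv
  have hdqxx : ∀ x t, HasDerivAt (fun y => qxx y t) (qxxx x t) x := by
    intro x t
    have h := hasDerivAt_fst hG2 x t
    have h' : HasDerivAt (fun y => qxx y t) (fderiv ℝ G2 (x, t) (1, 0)) x :=
      h.congr_of_eventuallyEq (Filter.Eventually.of_forall fun y => eq2 y t)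
    have e : qxxx x t = fderiv ℝ G2 (x, t) (1, 0) := by
      rw [hqxxx x t]; exact h'.deriv
    exact e ▸ h'
  have hdqt : ∀ x t, HasDerivAt (fun s => q x s) (qt x t) t := by
    intro x t
    have h := hasDerivAt_snd hq x t
    have e : qt x t = fderiv ℝ (fun p : ℝ × ℝ => q p.1 p.2) (x, t) (0, 1) := by
      rw [hqt x t]; exact h.deriv
    exact e ▸ h
  -- the key computation: the zero-curvature LHS is independent of lam
  have key : ∀ lam x t : ℝ,
      deriv (fun y => lam ^ 3 • a + lam ^ 2 • u y t + lam • Q₂ y t + Q₃ y t) x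
        - deriv (fun s => lam • a + u x s) t
        + ((lam • a + u x t)
              * (lam ^ 3 • a + lam ^ 2 • u x t + lam • Q₂ x t + Q₃ x t)
            - (lam ^ 3 • a + lam ^ 2 • u x t + lam • Q₂ x t + Q₃ x t)
              * (lam • a + u x t))
      = !![0, (1 / 4) * (qxxx x t - 6 * q x t * qx x t) - qt x t; 0, 0] := by
    intro lam x t
    have hu' : HasDerivAt (fun y => u y t) (!![0, qx x t; 0, 0]) x := by
      have h := hasDerivAt_mat22 (hasDerivAt_const x (0:ℝ)) (hdq x t)
        (hasDerivAt_const x (1:ℝ)) (hasDerivAt_const x (0:ℝ))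
      have hfun : (fun y => u y t) = fun y => !![0, q y t; 1, 0] := funext fun y => hu y t
      rw [hfun]; exact h
    have hQ₂' : HasDerivAt (fun y => Q₂ y t)
        (!![-(qx x t) / 2, -(qxx x t) / 2; 0, qx x t / 2]) x := by
      have h := hasDerivAt_mat22 (((hdq x t).neg).div_const 2) (((hdqx x t).neg).div_const 2)
        (hasDerivAt_const x (0:ℝ)) ((hdq x t).div_const 2)
      have hfun : (fun y => Q₂ y t)
          = fun y => !![-(q y t) / 2, -(qx y t) / 2; 0, q y t / 2] := funext fun y => hQ₂ y t
      rw [hfun]; exact h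
    have e12 : HasDerivAt (fun y => (qxx y t - 2 * q y t ^ 2) / 4)
        ((qxxx x t - 4 * q x t * qx x t) / 4) x := by
      have h := ((hdqxx x t).sub (((hdq x t).pow 2).const_mul 2)).div_const 4
      refine h.congr_deriv ?_
      push_cast
      ring
    have hQ₃' : HasDerivAt (fun y => Q₃ y t)
        (!![qxx x t / 4, (qxxx x t - 4 * q x t * qx x t) / 4;
            -(qx x t) / 2, -(qxx x t) / 4]) x := by
      have h := hasDerivAt_mat22 ((hdqx x t).div_const 4) e12
        (((hdq x t).neg).div_const 2) (((hdqx x t).neg).div_const 4)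
      have hfun : (fun y => Q₃ y t)
          = fun y => !![qx y t / 4, (qxx y t - 2 * q y t ^ 2) / 4;
                        -(q y t) / 2, -(qx y t) / 4] := funext fun y => hQ₃ y t
      rw [hfun]; exact h
    have hut' : HasDerivAt (fun s => u x s) (!![0, qt x t; 0, 0]) t := by
      have h := hasDerivAt_mat22 (hasDerivAt_const t (0:ℝ)) (hdqt x t)
        (hasDerivAt_const t (1:ℝ)) (hasDerivAt_const t (0:ℝ))
      have hfun : (fun s => u x s) = fun s => !![0, q x s; 1, 0] := funext fun s => hu x s
      rw [hfun]; exact h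
    have hN : HasDerivAt (fun y => lam ^ 3 • a + lam ^ 2 • u y t + lam • Q₂ y t + Q₃ y t)
        ((0 : Matrix (Fin 2) (Fin 2) ℝ) + lam ^ 2 • !![0, qx x t; 0, 0]
          + lam • !![-(qx x t) / 2, -(qxx x t) / 2; 0, qx x t / 2]
          + !![qxx x t / 4, (qxxx x t - 4 * q x t * qx x t) / 4;
               -(qx x t) / 2, -(qxx x t) / 4]) x :=
      (((hasDerivAt_const x (lam ^ 3 • a)).add (hu'.const_smul (lam ^ 2))).add
        (hQ₂'.const_smul lam)).add hQ₃'
    have hM : HasDerivAt (fun s => lam • a + u x s)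
        ((0 : Matrix (Fin 2) (Fin 2) ℝ) + !![0, qt x t; 0, 0]) t :=
      (hasDerivAt_const t (lam • a)).add hut'
    erw [hN.deriv, hM.deriv]
    rw [ha, hu x t, hQ₂ x t, hQ₃ x t]
    ext i j
    fin_cases i <;> fin_cases j <;>
      simp [Matrix.mul_apply, Fin.sum_univ_succ, Matrix.add_apply, Matrix.sub_apply,
        Matrix.smul_apply, smul_eq_mul] <;> ring
  constructor
  · intro hkdv lam x t
    rw [key lam x t]
    have h := hkdv x t
    ext i j
    fin_cases i <;> fin_cases j <;> simp <;> linarith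
  · intro hzc x t
    have h := hzc 0 x t
    rw [key 0 x t] at h
    have h01 := congrFun (congrFun h 0) 1
    simp at h01
    linarith
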